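/- Every discrete infinitely divisible probability measure on ℝ has characteristic function separated from zero: if μ is a discrete probability measure such that for every positive integer n there exists a probability measure ν_n with μ equal to the n-fold convolution power of ν_n, then the characteristic function f of μ satisfies inf_{t∈ℝ} |f(t)| > 0. -/

import Mathlib

open MeasureTheory Complex

/-- The `n`-fold convolution power of a measure on `ℝ` (`ν^{*0} = δ_0`). -/
noncomputable def convPow (ν : Measure ℝ) : ℕ → Measure ℝ
  | 0 => Measure.dirac 0
  | n + 1 => (convPow ν n).conv ν

namespace CharFunSep

/-- atom weights -/
noncomputable def wgt (ρ : Measure ℝ) (x : ℝ) : ℝ := (ρ {x}).toReal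

/-- discreteness -/
def IsDiscrete (ρ : Measure ℝ) : Prop := ∃ s : Set ℝ, s.Countable ∧ ρ sᶜ = 0

/-- characteristic function -/
noncomputable def cf (ρ : Measure ℝ) (t : ℝ) : ℂ :=
  ∫ x : ℝ, Complex.exp (Complex.I * (t : ℂ) * (x : ℂ)) ∂ρ

/-- extension of the characteristic function to the big torus -/
noncomputable def Afun (ρ : Measure ℝ) (k : ℝ → Circle) : ℂ :=
  ∑' x : ℝ, (wgt ρ x : ℂ) * (k x : ℂ)

/-- embedding of ℝ into the big torus -/
noncomputable def iota (t : ℝ) : ℝ → Circle := fun x => Circle.exp (t * x)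

lemma wgt_nonneg (ρ : Measure ℝ) (x : ℝ) : 0 ≤ wgt ρ x := ENNReal.toReal_nonneg

lemma tsum_meas_singleton (ρ : Measure ℝ) [IsProbabilityMeasure ρ] (h : IsDiscrete ρ) :
    ∑' x : ℝ, ρ {x} = 1 := by
  obtain ⟨s, hsc, hs0⟩ := h
  have h1 : ρ s = 1 := by
    have := measure_add_measure_compl (μ := ρ) hsc.measurableSet
    rw [hs0, add_zero, measure_univ] at this
    exact this
  have h2 : ρ s = ∑' x : s, ρ {(x : ℝ)} := by
    have : s = ⋃ x ∈ s, {x} := by simp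
    rw [show ρ s = ρ (⋃ x ∈ s, {x}) by rw [← this]]
    exact measure_biUnion hsc (fun a _ b _ hab => by simp [Set.disjoint_singleton, hab])
      (fun b _ => measurableSet_singleton b)
  have h3 : ∑' x : s, ρ {(x : ℝ)} = ∑' x : ℝ, ρ {x} := by
    refine tsum_subtype_eq_of_support_subset (f := fun x => ρ {x}) (s := s) ?_
    intro x hx
    by_contra hxs
    apply hx
    exact measure_mono_null (by simpa using hxs) hs0
  rw [← h3, ← h2, h1]

lemma summable_wgt (ρ : Measure ℝ) [IsProbabilityMeasure ρ] (h : IsDiscrete ρ) :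
    Summable (wgt ρ) := by
  have := tsum_meas_singleton ρ h
  refine ENNReal.summable_toReal ?_
  rw [this]; exact ENNReal.one_ne_top

lemma tsum_wgt (ρ : Measure ℝ) [IsProbabilityMeasure ρ] (h : IsDiscrete ρ) :
    ∑' x : ℝ, wgt ρ x = 1 := by
  have h1 := tsum_meas_singleton ρ h
  have h2 : ∑' x : ℝ, wgt ρ x = (∑' x : ℝ, ρ {x}).toReal := by
    exact (ENNReal.tsum_toReal_eq (fun a => measure_ne_top ρ {a})).symm
  rw [h2, h1, ENNReal.toReal_one]

lemma integrable_exp (ρ : Measure ℝ) [IsProbabilityMeasure ρ] (t : ℝ) :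
    Integrable (fun x : ℝ => Complex.exp (Complex.I * (t : ℂ) * (x : ℂ))) ρ := by
  refine (integrable_const (1 : ℝ)).mono' ?_ ?_
  · exact (Complex.continuous_exp.comp (by continuity)).aestronglyMeasurable
  · refine Filter.Eventually.of_forall (fun x => ?_)
    have : (Complex.I * (t : ℂ) * (x : ℂ)).re = 0 := by simp
    simp [Complex.norm_exp, this]

lemma norm_exp_eq_one (t x : ℝ) : ‖(Complex.exp (Complex.I * (t : ℂ) * (x : ℂ)))‖ = 1 := by
  have : (Complex.I * (t : ℂ) * (x : ℂ)).re = 0 := by simp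
  simp [Complex.norm_exp, this]

lemma convPow_prob (ν : Measure ℝ) [IsProbabilityMeasure ν] (n : ℕ) :
    IsProbabilityMeasure (convPow ν n) := by
  induction n with
  | zero => exact Measure.dirac.isProbabilityMeasure
  | succ m ih =>
    haveI := ih
    show IsProbabilityMeasure ((convPow ν m).conv ν)
    infer_instance

lemma cf_conv (σ ν : Measure ℝ) [IsProbabilityMeasure σ] [IsProbabilityMeasure ν] (t : ℝ) :
    cf (σ.conv ν) t = cf σ t * cf ν t := by
  unfold cf
  rw [Measure.conv, integral_map (by fun_prop) ?hm]
  case hm => exact (Complex.continuous_exp.comp (by continuity)).aestronglyMeasurable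
  have heq : ∀ p : ℝ × ℝ, Complex.exp (Complex.I * (t : ℂ) * ((p.1 + p.2 : ℝ) : ℂ)) =
      Complex.exp (Complex.I * (t : ℂ) * (p.1 : ℂ)) * Complex.exp (Complex.I * (t : ℂ) * (p.2 : ℂ)) := by
    intro p
    rw [← Complex.exp_add]
    push_cast
    ring_nf
  have h2 : ∫ p : ℝ × ℝ, Complex.exp (Complex.I * (t : ℂ) * ((p.1 + p.2 : ℝ) : ℂ)) ∂(σ.prod ν) =
      ∫ p : ℝ × ℝ, Complex.exp (Complex.I * (t : ℂ) * (p.1 : ℂ)) *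
        Complex.exp (Complex.I * (t : ℂ) * (p.2 : ℂ)) ∂(σ.prod ν) :=
    integral_congr_ae (Filter.Eventually.of_forall heq)
  rw [h2]
  exact integral_prod_mul (μ := σ) (ν := ν)
    (f := fun x => Complex.exp (Complex.I * (t : ℂ) * (x : ℂ)))
    (g := fun y => Complex.exp (Complex.I * (t : ℂ) * (y : ℂ)))

lemma cf_convPow (ν : Measure ℝ) [IsProbabilityMeasure ν] (n : ℕ) (t : ℝ) :
    cf (convPow ν n) t = (cf ν t) ^ n := by
  induction n with
  | zero =>
    show cf (Measure.dirac 0) t = 1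
    unfold cf
    rw [integral_dirac]
    simp
  | succ m ih =>
    haveI := convPow_prob ν m
    show cf ((convPow ν m).conv ν) t = _
    rw [cf_conv _ _ t, ih, pow_succ]

lemma isDiscrete_of_conv (σ ν : Measure ℝ) [IsProbabilityMeasure σ] [IsProbabilityMeasure ν]
    (h : IsDiscrete (σ.conv ν)) : IsDiscrete ν := by
  obtain ⟨s, hsc, hs0⟩ := h
  rw [Measure.conv, Measure.map_apply (by fun_prop) hsc.measurableSet.compl,
    Measure.prod_apply (measurable_add hsc.measurableSet.compl)] at hs0
  · have hae : ∀ᵐ x ∂σ, ν (Prod.mk x ⁻¹' ((fun p : ℝ × ℝ => p.1 + p.2) ⁻¹' sᶜ)) = 0 := by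
      have := (lintegral_eq_zero_iff
        (measurable_measure_prodMk_left (measurable_add hsc.measurableSet.compl))).mp hs0
      filter_upwards [this] with x hx
      exact hx
    haveI : (ae σ).NeBot := ae_neBot.mpr (IsProbabilityMeasure.ne_zero σ)
    obtain ⟨x₀, hx₀⟩ := hae.exists
    refine ⟨(fun y : ℝ => x₀ + y) ⁻¹' s, hsc.preimage (add_right_injective x₀), ?_⟩
    have hset : ((fun y : ℝ => x₀ + y) ⁻¹' s)ᶜ =
        Prod.mk x₀ ⁻¹' ((fun p : ℝ × ℝ => p.1 + p.2) ⁻¹' sᶜ) := by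
      ext y; simp
    rw [hset]
    exact hx₀

lemma isDiscrete_root (ν : Measure ℝ) [IsProbabilityMeasure ν] (n : ℕ)
    (h : IsDiscrete (convPow ν (n + 1))) : IsDiscrete ν := by
  haveI := convPow_prob ν n
  exact isDiscrete_of_conv (convPow ν n) ν h

lemma norm_term_eq (ρ : Measure ℝ) (k : ℝ → Circle) (x : ℝ) :
    ‖(wgt ρ x : ℂ) * (k x : ℂ)‖ = wgt ρ x := by
  rw [norm_mul, Complex.norm_real, Real.norm_of_nonneg (wgt_nonneg ρ x),
    Circle.norm_coe, mul_one]

lemma summable_term (ρ : Measure ℝ) [IsProbabilityMeasure ρ] (h : IsDiscrete ρ) (k : ℝ → Circle) :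
    Summable (fun x : ℝ => (wgt ρ x : ℂ) * (k x : ℂ)) := by
  refine Summable.of_norm_bounded (summable_wgt ρ h) (fun x => ?_)
  rw [norm_term_eq]

lemma Afun_one (ρ : Measure ℝ) [IsProbabilityMeasure ρ] (h : IsDiscrete ρ) :
    Afun ρ 1 = 1 := by
  unfold Afun
  have : ∀ x : ℝ, (wgt ρ x : ℂ) * (((1 : ℝ → Circle) x : Circle) : ℂ) = ((wgt ρ x : ℝ) : ℂ) := by
    intro x; simp
  rw [tsum_congr this, ← Complex.ofReal_tsum, tsum_wgt ρ h, Complex.ofReal_one]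

lemma norm_Afun_le_one (ρ : Measure ℝ) [IsProbabilityMeasure ρ] (h : IsDiscrete ρ)
    (k : ℝ → Circle) : ‖Afun ρ k‖ ≤ 1 := by
  have h1 : ‖Afun ρ k‖ ≤ ∑' x : ℝ, ‖(wgt ρ x : ℂ) * (k x : ℂ)‖ := by
    refine norm_tsum_le_tsum_norm ?_
    simpa only [norm_term_eq] using summable_wgt ρ h
  calc ‖Afun ρ k‖ ≤ ∑' x : ℝ, ‖(wgt ρ x : ℂ) * (k x : ℂ)‖ := h1
    _ = ∑' x : ℝ, wgt ρ x := by simp only [norm_term_eq]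
    _ = 1 := tsum_wgt ρ h

lemma continuous_Afun (ρ : Measure ℝ) [IsProbabilityMeasure ρ] (h : IsDiscrete ρ) :
    Continuous (Afun ρ) := by
  refine continuous_tsum (fun x => ?_) (summable_wgt ρ h) (fun x k => ?_)
  · exact continuous_const.mul (continuous_induced_dom.comp (continuous_apply x))
  · rw [norm_term_eq]

lemma Afun_iota (ρ : Measure ℝ) [IsProbabilityMeasure ρ] (h : IsDiscrete ρ) (t : ℝ) :
    Afun ρ (iota t) = cf ρ t := by
  obtain ⟨s, hsc, hs0⟩ := h
  have hmem : ∀ᵐ x ∂ρ, x ∈ s := by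
    rw [ae_iff]
    exact hs0
  have hrestrict : ρ.restrict s = ρ := Measure.restrict_eq_self_of_ae_mem hmem
  have h1 : cf ρ t = ∑' a : s, (ρ {(a : ℝ)}).toReal •
      Complex.exp (Complex.I * (t : ℂ) * ((a : ℝ) : ℂ)) := by
    unfold cf
    conv_lhs => rw [← hrestrict]
    exact setIntegral_countable _ hsc ((integrable_exp ρ t).integrableOn)
  have h2 : Afun ρ (iota t) = ∑' a : s, (wgt ρ (a : ℝ) : ℂ) * ((iota t (a : ℝ) : Circle) : ℂ) := by
    refine (tsum_subtype_eq_of_support_subset ?_).symm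
    intro x hx
    by_contra hxs
    apply hx
    have : wgt ρ x = 0 := by
      unfold wgt
      rw [measure_mono_null (by simpa using hxs) hs0]
      simp
    simp [this]
  rw [h2, h1]
  refine tsum_congr (fun a => ?_)
  rw [Complex.real_smul]
  show (wgt ρ (a : ℝ) : ℂ) * ((Circle.exp (t * (a : ℝ)) : Circle) : ℂ) = _
  rw [Circle.coe_exp]
  unfold wgt
  congr 1
  push_cast
  ring

lemma key_ineq (ρ : Measure ℝ) [IsProbabilityMeasure ρ] (h : IsDiscrete ρ) (x y : ℝ → Circle) :
    ‖Afun ρ x‖ ≤ ‖Afun ρ y‖ + Real.sqrt (2 - 2 * ‖Afun ρ (x * y⁻¹)‖) := by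
  classical
  set D : ℂ := Afun ρ (x * y⁻¹) with hD
  set c : ℂ := if D = 0 then 1 else D / (‖D‖ : ℂ) with hc
  have hnc : ‖c‖ = 1 := by
    rw [hc]
    split_ifs with h0
    · simp
    · rw [norm_div, Complex.norm_real, Real.norm_eq_abs,
        _root_.abs_of_nonneg (norm_nonneg D)]
      field_simp [norm_ne_zero_iff.mpr h0]
  have hcD : (starRingEnd ℂ) c * D = (‖D‖ : ℂ) := by
    rw [hc]
    split_ifs with h0
    · simp [h0]
    · rw [map_div₀, Complex.conj_ofReal, div_mul_eq_mul_div,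
        mul_comm ((starRingEnd ℂ) D) D, Complex.mul_conj, Complex.normSq_eq_norm_sq, sq,
        Complex.ofReal_mul, mul_div_assoc,
        div_self (by exact_mod_cast norm_ne_zero_iff.mpr h0 : ((‖D‖ : ℝ) : ℂ) ≠ 0), mul_one]
  -- pointwise difference
  set d : ℝ → ℝ := fun a => ‖((x a : Circle) : ℂ) - c * ((y a : Circle) : ℂ)‖ with hd
  have hd2 : ∀ a, d a ≤ 2 := by
    intro a
    have := norm_sub_le ((x a : Circle) : ℂ) (c * ((y a : Circle) : ℂ))
    rw [hd]
    refine this.trans ?_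
    rw [norm_mul, hnc, one_mul]
    simp only [Circle.norm_coe]
    norm_num
  have hdnn : ∀ a, 0 ≤ d a := fun a => norm_nonneg _
  have hsumwd : Summable (fun a => wgt ρ a * d a) := by
    refine Summable.of_nonneg_of_le (fun a => mul_nonneg (wgt_nonneg ρ a) (hdnn a))
      (fun a => ?_) ((summable_wgt ρ h).mul_left 2)
    calc wgt ρ a * d a ≤ wgt ρ a * 2 := by
          exact mul_le_mul_of_nonneg_left (hd2 a) (wgt_nonneg ρ a)
      _ = 2 * wgt ρ a := by ring
  have hsumwd2 : Summable (fun a => wgt ρ a * d a ^ 2) := by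
    refine Summable.of_nonneg_of_le (fun a => mul_nonneg (wgt_nonneg ρ a) (sq_nonneg _))
      (fun a => ?_) ((summable_wgt ρ h).mul_left 4)
    calc wgt ρ a * d a ^ 2 ≤ wgt ρ a * 4 := by
          refine mul_le_mul_of_nonneg_left ?_ (wgt_nonneg ρ a)
          calc d a ^ 2 ≤ 2 ^ 2 := by
                exact pow_le_pow_left₀ (hdnn a) (hd2 a) 2
            _ = 4 := by norm_num
      _ = 4 * wgt ρ a := by ring
  -- step A
  have hA : ‖Afun ρ x‖ - ‖Afun ρ y‖ ≤ ‖Afun ρ x - c * Afun ρ y‖ := by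
    have h1 : ‖c * Afun ρ y‖ = ‖Afun ρ y‖ := by rw [norm_mul, hnc, one_mul]
    calc ‖Afun ρ x‖ - ‖Afun ρ y‖ = ‖Afun ρ x‖ - ‖c * Afun ρ y‖ := by rw [h1]
      _ ≤ ‖Afun ρ x - c * Afun ρ y‖ := norm_sub_norm_le _ _
  -- step B
  have hB : Afun ρ x - c * Afun ρ y =
      ∑' a : ℝ, (wgt ρ a : ℂ) * (((x a : Circle) : ℂ) - c * ((y a : Circle) : ℂ)) := by
    unfold Afun
    rw [← tsum_mul_left]
    rw [← Summable.tsum_sub (summable_term ρ h x) ((summable_term ρ h y).mul_left c)]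
    refine tsum_congr (fun a => ?_)
    ring
  -- step C
  have hC : ‖Afun ρ x - c * Afun ρ y‖ ≤ ∑' a : ℝ, wgt ρ a * d a := by
    rw [hB]
    have hnorm : ∀ a : ℝ,
        ‖(wgt ρ a : ℂ) * (((x a : Circle) : ℂ) - c * ((y a : Circle) : ℂ))‖ = wgt ρ a * d a := by
      intro a
      rw [norm_mul, Complex.norm_real, Real.norm_of_nonneg (wgt_nonneg ρ a), hd]
    calc ‖∑' a : ℝ, (wgt ρ a : ℂ) * (((x a : Circle) : ℂ) - c * ((y a : Circle) : ℂ))‖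
        ≤ ∑' a : ℝ, ‖(wgt ρ a : ℂ) * (((x a : Circle) : ℂ) - c * ((y a : Circle) : ℂ))‖ := by
          refine norm_tsum_le_tsum_norm ?_
          simpa only [hnorm] using hsumwd
      _ = ∑' a : ℝ, wgt ρ a * d a := by simp only [hnorm]
  -- step D : Cauchy-Schwarz
  have hD2 : (∑' a : ℝ, wgt ρ a * d a) ≤ Real.sqrt (∑' a : ℝ, wgt ρ a * d a ^ 2) := by
    refine Summable.tsum_le_of_sum_le hsumwd (fun F => ?_)
    refine Real.le_sqrt_of_sq_le ?_
    have hCS := Finset.sum_mul_sq_le_sq_mul_sq F (fun a => Real.sqrt (wgt ρ a))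
      (fun a => Real.sqrt (wgt ρ a) * d a)
    have he : ∀ a : ℝ, Real.sqrt (wgt ρ a) * (Real.sqrt (wgt ρ a) * d a) = wgt ρ a * d a := by
      intro a
      rw [← mul_assoc, Real.mul_self_sqrt (wgt_nonneg ρ a)]
    have he2 : ∀ a : ℝ, Real.sqrt (wgt ρ a) ^ 2 = wgt ρ a := fun a =>
      Real.sq_sqrt (wgt_nonneg ρ a)
    have he3 : ∀ a : ℝ, (Real.sqrt (wgt ρ a) * d a) ^ 2 = wgt ρ a * d a ^ 2 := by
      intro a
      rw [mul_pow, he2]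
    rw [show (∑ a ∈ F, Real.sqrt (wgt ρ a) * (Real.sqrt (wgt ρ a) * d a)) =
      ∑ a ∈ F, wgt ρ a * d a from Finset.sum_congr rfl (fun a _ => he a)] at hCS
    rw [show (∑ a ∈ F, Real.sqrt (wgt ρ a) ^ 2) = ∑ a ∈ F, wgt ρ a from
      Finset.sum_congr rfl (fun a _ => he2 a)] at hCS
    rw [show (∑ a ∈ F, (Real.sqrt (wgt ρ a) * d a) ^ 2) = ∑ a ∈ F, wgt ρ a * d a ^ 2 from
      Finset.sum_congr rfl (fun a _ => he3 a)] at hCS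
    refine hCS.trans ?_
    have hle1 : (∑ a ∈ F, wgt ρ a) ≤ 1 := by
      rw [← tsum_wgt ρ h]
      exact Summable.sum_le_tsum F (fun a _ => wgt_nonneg ρ a) (summable_wgt ρ h)
    have hle2 : (∑ a ∈ F, wgt ρ a * d a ^ 2) ≤ ∑' a : ℝ, wgt ρ a * d a ^ 2 :=
      Summable.sum_le_tsum F (fun a _ => mul_nonneg (wgt_nonneg ρ a) (sq_nonneg _)) hsumwd2
    have hnn : (0 : ℝ) ≤ ∑ a ∈ F, wgt ρ a * d a ^ 2 :=
      Finset.sum_nonneg (fun a _ => mul_nonneg (wgt_nonneg ρ a) (sq_nonneg _))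
    calc (∑ a ∈ F, wgt ρ a) * ∑ a ∈ F, wgt ρ a * d a ^ 2
        ≤ 1 * ∑ a ∈ F, wgt ρ a * d a ^ 2 := by
          exact mul_le_mul_of_nonneg_right hle1 hnn
      _ = ∑ a ∈ F, wgt ρ a * d a ^ 2 := one_mul _
      _ ≤ ∑' a : ℝ, wgt ρ a * d a ^ 2 := hle2
  -- step E : compute the second moment
  have hE : (∑' a : ℝ, wgt ρ a * d a ^ 2) = 2 - 2 * ‖D‖ := by
    have hZ : ∀ a : ℝ, (((x * y⁻¹) a : Circle) : ℂ) =
        ((x a : Circle) : ℂ) * (starRingEnd ℂ) ((y a : Circle) : ℂ) := by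
      intro a
      show (((x a) * (y a)⁻¹ : Circle) : ℂ) = _
      rw [Circle.coe_mul, Circle.coe_inv_eq_conj]
    have hdsq : ∀ a : ℝ, d a ^ 2 =
        2 - 2 * ((starRingEnd ℂ) c * (((x * y⁻¹) a : Circle) : ℂ)).re := by
      intro a
      have h1 : d a ^ 2 = Complex.normSq (((x a : Circle) : ℂ) - c * ((y a : Circle) : ℂ)) := by
        show ‖((x a : Circle) : ℂ) - c * ((y a : Circle) : ℂ)‖ ^ 2 = _
        rw [Complex.sq_norm]
      rw [h1, Complex.normSq_sub]
      have h2 : Complex.normSq ((x a : Circle) : ℂ) = 1 := by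
        rw [Complex.normSq_eq_norm_sq, Circle.norm_coe]
        norm_num
      have h3 : Complex.normSq (c * ((y a : Circle) : ℂ)) = 1 := by
        rw [Complex.normSq_eq_norm_sq, norm_mul]
        rw [hnc, one_mul, Circle.norm_coe]
        norm_num
      have h4 : (((x a : Circle) : ℂ) * (starRingEnd ℂ) (c * ((y a : Circle) : ℂ))).re
          = ((starRingEnd ℂ) c * (((x * y⁻¹) a : Circle) : ℂ)).re := by
        rw [hZ a, map_mul]
        congr 1
        ring
      rw [h2, h3, h4]
      ring
    have habs : ∀ a : ℝ, |((starRingEnd ℂ) c * (((x * y⁻¹) a : Circle) : ℂ)).re| ≤ 1 := by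
      intro a
      refine (Complex.abs_re_le_norm _).trans ?_
      rw [norm_mul]
      have hc1 : ‖((starRingEnd ℂ) c)‖ = 1 := by
        rw [Complex.norm_conj]
        exact hnc
      have hc2 : ‖((((x * y⁻¹) a : Circle) : ℂ))‖ = 1 := Circle.norm_coe _
      rw [hc1, hc2, mul_one]
    have hsumr : Summable (fun a =>
        wgt ρ a * ((starRingEnd ℂ) c * (((x * y⁻¹) a : Circle) : ℂ)).re) := by
      refine Summable.of_norm_bounded (summable_wgt ρ h) (fun a => ?_)
      rw [Real.norm_eq_abs, abs_mul, _root_.abs_of_nonneg (wgt_nonneg ρ a)]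
      calc wgt ρ a * |((starRingEnd ℂ) c * (((x * y⁻¹) a : Circle) : ℂ)).re| ≤ wgt ρ a * 1 :=
            mul_le_mul_of_nonneg_left (habs a) (wgt_nonneg ρ a)
        _ = wgt ρ a := mul_one _
    have htsum1 : (∑' a : ℝ, wgt ρ a * ((starRingEnd ℂ) c * (((x * y⁻¹) a : Circle) : ℂ)).re)
        = ((starRingEnd ℂ) c * D).re := by
      have hterm : ∀ a : ℝ, wgt ρ a * ((starRingEnd ℂ) c * (((x * y⁻¹) a : Circle) : ℂ)).re =
          ((starRingEnd ℂ) c * ((wgt ρ a : ℂ) * (((x * y⁻¹) a : Circle) : ℂ))).re := by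
        intro a
        have : (starRingEnd ℂ) c * ((wgt ρ a : ℂ) * (((x * y⁻¹) a : Circle) : ℂ)) =
            (wgt ρ a : ℂ) * ((starRingEnd ℂ) c * (((x * y⁻¹) a : Circle) : ℂ)) := by ring
        rw [this, Complex.re_ofReal_mul]
      rw [tsum_congr hterm]
      have hsum2 : Summable (fun a : ℝ => (starRingEnd ℂ) c *
          ((wgt ρ a : ℂ) * (((x * y⁻¹) a : Circle) : ℂ))) :=
        (summable_term ρ h (x * y⁻¹)).mul_left _
      have := Complex.reCLM.map_tsum hsum2
      rw [show (fun a : ℝ => ((starRingEnd ℂ) c *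
          ((wgt ρ a : ℂ) * (((x * y⁻¹) a : Circle) : ℂ))).re) =
          (fun a : ℝ => Complex.reCLM ((starRingEnd ℂ) c *
          ((wgt ρ a : ℂ) * (((x * y⁻¹) a : Circle) : ℂ)))) from rfl, ← this]
      rw [tsum_mul_left]
      rfl
    have hterm2 : ∀ a : ℝ, wgt ρ a * d a ^ 2 = 2 * wgt ρ a -
        2 * (wgt ρ a * ((starRingEnd ℂ) c * (((x * y⁻¹) a : Circle) : ℂ)).re) := by
      intro a
      rw [hdsq a]
      ring
    rw [tsum_congr hterm2]
    rw [Summable.tsum_sub ((summable_wgt ρ h).mul_left 2) (hsumr.mul_left 2)]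
    rw [tsum_mul_left, tsum_mul_left, tsum_wgt ρ h, htsum1, hcD, Complex.ofReal_re]
    ring
  have hfinal : ‖Afun ρ x‖ - ‖Afun ρ y‖ ≤ Real.sqrt (2 - 2 * ‖D‖) := by
    calc ‖Afun ρ x‖ - ‖Afun ρ y‖ ≤ ‖Afun ρ x - c * Afun ρ y‖ := hA
      _ ≤ ∑' a : ℝ, wgt ρ a * d a := hC
      _ ≤ Real.sqrt (∑' a : ℝ, wgt ρ a * d a ^ 2) := hD2
      _ = Real.sqrt (2 - 2 * ‖D‖) := by rw [hE]
  linarith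

end CharFunSep

/-- Every discrete infinitely divisible probability measure on `ℝ` has
characteristic function separated from zero. -/
theorem charFun_separated_of_discrete_infinitely_divisible
    (μ : Measure ℝ) [IsProbabilityMeasure μ]
    (hdiscrete : ∃ s : Set ℝ, s.Countable ∧ μ sᶜ = 0)
    (hID : ∀ n : ℕ, 0 < n → ∃ ν : Measure ℝ, IsProbabilityMeasure ν ∧ μ = convPow ν n)
    (f : ℝ → ℂ)
    (hf : ∀ t : ℝ, f t = ∫ x : ℝ, Complex.exp (Complex.I * (t : ℂ) * (x : ℂ)) ∂μ) :
    ∃ c : ℝ, 0 < c ∧ ∀ t : ℝ, c ≤ ‖f t‖ := by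
  classical
  open CharFunSep in
  have hμdisc : CharFunSep.IsDiscrete μ := hdiscrete
  have hroots : ∀ m : ℕ, ∃ ν : Measure ℝ, IsProbabilityMeasure ν ∧ μ = convPow ν (m + 1) :=
    fun m => hID (m + 1) (Nat.succ_pos m)
  choose ν hνprob hνeq using hroots
  haveI : ∀ m, IsProbabilityMeasure (ν m) := hνprob
  have hνdisc : ∀ m, CharFunSep.IsDiscrete (ν m) := by
    intro m
    haveI := hνprob m
    refine CharFunSep.isDiscrete_root (ν m) m ?_
    rw [← hνeq m]
    exact hμdisc
  let M : (ℝ → Circle) → ℝ := fun k => ‖CharFunSep.Afun μ k‖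
  let Mn : ℕ → (ℝ → Circle) → ℝ := fun m k => ‖CharFunSep.Afun (ν m) k‖
  have hMcont : Continuous M := (CharFunSep.continuous_Afun μ hμdisc).norm
  have hiotacont : Continuous CharFunSep.iota := by
    refine continuous_pi (fun x => ?_)
    exact Circle.exp.continuous.comp (continuous_id.mul continuous_const)
  let K : Set (ℝ → Circle) := closure (Set.range CharFunSep.iota)
  have hiota0 : CharFunSep.iota 0 = 1 := by
    funext x
    show Circle.exp (0 * x) = 1
    rw [zero_mul, Circle.exp_zero]
  have hKone : (1 : ℝ → Circle) ∈ K := subset_closure ⟨0, hiota0⟩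
  let H : Subgroup (ℝ → Circle) :=
    { carrier := Set.range CharFunSep.iota
      one_mem' := ⟨0, hiota0⟩
      mul_mem' := by
        rintro a b ⟨u, rfl⟩ ⟨v, rfl⟩
        refine ⟨u + v, ?_⟩
        funext x
        show Circle.exp ((u + v) * x) = Circle.exp (u * x) * Circle.exp (v * x)
        rw [add_mul, Circle.exp_add]
      inv_mem' := by
        rintro a ⟨u, rfl⟩
        refine ⟨-u, ?_⟩
        funext x
        show Circle.exp (-u * x) = (Circle.exp (u * x))⁻¹
        rw [neg_mul, Circle.exp_neg] }
  have hKsub : ∀ a ∈ K, ∀ b ∈ K, a * b⁻¹ ∈ K := by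
    intro a ha b hb
    have hcoe : (H.topologicalClosure : Set (ℝ → Circle)) = K := Subgroup.topologicalClosure_coe
    have h1 : a ∈ H.topologicalClosure := by rw [← SetLike.mem_coe, hcoe]; exact ha
    have h2 : b ∈ H.topologicalClosure := by rw [← SetLike.mem_coe, hcoe]; exact hb
    have := H.topologicalClosure.mul_mem h1 (H.topologicalClosure.inv_mem h2)
    rw [← SetLike.mem_coe, hcoe] at this
    exact this
  have hEq : ∀ m : ℕ, Set.EqOn (CharFunSep.Afun μ)
      (fun k => (CharFunSep.Afun (ν m) k) ^ (m + 1)) K := by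
    intro m
    refine Set.EqOn.closure ?_ (CharFunSep.continuous_Afun μ hμdisc)
      ((CharFunSep.continuous_Afun (ν m) (hνdisc m)).pow (m + 1))
    rintro k ⟨t, rfl⟩
    rw [CharFunSep.Afun_iota μ hμdisc t]
    show _ = (CharFunSep.Afun (ν m) (CharFunSep.iota t)) ^ (m + 1)
    rw [CharFunSep.Afun_iota (ν m) (hνdisc m) t]
    rw [hνeq m]
    exact CharFunSep.cf_convPow (ν m) (m + 1) t
  have hMrel : ∀ m : ℕ, ∀ k ∈ K, M k = (Mn m k) ^ (m + 1) := by
    intro m k hk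
    show ‖CharFunSep.Afun μ k‖ = ‖CharFunSep.Afun (ν m) k‖ ^ (m + 1)
    rw [hEq m hk, norm_pow]
  have hMone : M 1 = 1 := by
    show ‖CharFunSep.Afun μ 1‖ = 1
    rw [CharFunSep.Afun_one μ hμdisc, norm_one]
  haveI hKpre : PreconnectedSpace K := by
    refine Subtype.preconnectedSpace ?_
    refine IsPreconnected.closure ?_
    rw [← Set.image_univ]
    exact isPreconnected_univ.image _ hiotacont.continuousOn
  let S : Set K := {k : K | 0 < M (k : ℝ → Circle)}
  have hScont : Continuous fun k : K => M (k : ℝ → Circle) := hMcont.comp continuous_subtype_val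
  have hSopen : IsOpen S := isOpen_lt continuous_const hScont
  have hSne : S.Nonempty := ⟨⟨1, hKone⟩, by
    show (0 : ℝ) < M 1
    rw [hMone]; norm_num⟩
  have hSclosed : IsClosed S := by
    refine isClosed_of_closure_subset ?_
    intro k₀ hk₀
    show 0 < M (k₀ : ℝ → Circle)
    have hNopen : IsOpen {k : K | 7/8 < M ((k : ℝ → Circle) * ((k₀ : ℝ → Circle))⁻¹)} := by
      refine isOpen_lt continuous_const ?_
      exact hMcont.comp (continuous_subtype_val.mul continuous_const)
    have hk₀N : k₀ ∈ {k : K | 7/8 < M ((k : ℝ → Circle) * ((k₀ : ℝ → Circle))⁻¹)} := by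
      show (7/8 : ℝ) < M ((k₀ : ℝ → Circle) * ((k₀ : ℝ → Circle))⁻¹)
      rw [mul_inv_cancel, hMone]
      norm_num
    obtain ⟨k₁, hk₁N, hk₁S⟩ := (_root_.mem_closure_iff.mp hk₀) _ hNopen hk₀N
    have hz : ((k₁ : ℝ → Circle) * ((k₀ : ℝ → Circle))⁻¹) ∈ K := hKsub _ k₁.2 _ k₀.2
    have hMz : (7/8 : ℝ) < M ((k₁ : ℝ → Circle) * ((k₀ : ℝ → Circle))⁻¹) := hk₁N
    have hβ : 0 < M (k₁ : ℝ → Circle) := hk₁S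
    obtain ⟨n₀, hn₀⟩ := exists_pow_lt_of_lt_one hβ (by norm_num : (7/8 : ℝ) < 1)
    have hpow : (7/8 : ℝ) ^ (n₀ + 1) < M (k₁ : ℝ → Circle) :=
      lt_of_le_of_lt (pow_le_pow_of_le_one (by norm_num) (by norm_num) (Nat.le_succ n₀)) hn₀
    have h78pow : ((7:ℝ)/8) ^ (n₀ + 1) ≤ 7/8 := by
      calc ((7:ℝ)/8) ^ (n₀ + 1) ≤ ((7:ℝ)/8) ^ 1 :=
            pow_le_pow_of_le_one (by norm_num) (by norm_num) (Nat.one_le_iff_ne_zero.mpr (Nat.succ_ne_zero n₀))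
        _ = 7/8 := pow_one _
    have hMn1 : (7/8 : ℝ) < Mn n₀ (k₁ : ℝ → Circle) := by
      by_contra hle
      push_neg at hle
      have hb : M (k₁ : ℝ → Circle) ≤ (7/8 : ℝ) ^ (n₀ + 1) := by
        rw [hMrel n₀ _ k₁.2]
        exact pow_le_pow_left₀ (norm_nonneg _) hle (n₀ + 1)
      linarith
    have hMnz : (7/8 : ℝ) < Mn n₀ ((k₁ : ℝ → Circle) * ((k₀ : ℝ → Circle))⁻¹) := by
      by_contra hle
      push_neg at hle
      have hb : M ((k₁ : ℝ → Circle) * ((k₀ : ℝ → Circle))⁻¹) ≤ (7/8 : ℝ) ^ (n₀ + 1) := by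
        rw [hMrel n₀ _ hz]
        exact pow_le_pow_left₀ (norm_nonneg _) hle (n₀ + 1)
      linarith
    have hkey : Mn n₀ (k₁ : ℝ → Circle) ≤ Mn n₀ (k₀ : ℝ → Circle) +
        Real.sqrt (2 - 2 * Mn n₀ ((k₁ : ℝ → Circle) * ((k₀ : ℝ → Circle))⁻¹)) :=
      CharFunSep.key_ineq (ν n₀) (hνdisc n₀) (k₁ : ℝ → Circle) (k₀ : ℝ → Circle)
    have hsq : Real.sqrt (2 - 2 * Mn n₀ ((k₁ : ℝ → Circle) * ((k₀ : ℝ → Circle))⁻¹)) ≤ 1/2 := by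
      have h1 : 2 - 2 * Mn n₀ ((k₁ : ℝ → Circle) * ((k₀ : ℝ → Circle))⁻¹) ≤ 1/4 := by linarith
      calc Real.sqrt (2 - 2 * Mn n₀ ((k₁ : ℝ → Circle) * ((k₀ : ℝ → Circle))⁻¹))
          ≤ Real.sqrt (1/4) := Real.sqrt_le_sqrt h1
        _ = 1/2 := by
          rw [show (1/4 : ℝ) = (1/2)^2 by norm_num, Real.sqrt_sq (by norm_num : (0:ℝ) ≤ 1/2)]
    have hMn0 : 0 < Mn n₀ (k₀ : ℝ → Circle) := by linarith
    rw [hMrel n₀ _ k₀.2]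
    exact pow_pos hMn0 _
  have hSall : S = Set.univ := by
    rcases isClopen_iff.mp ⟨hSclosed, hSopen⟩ with h | h
    · rw [h] at hSne
      exact absurd hSne Set.not_nonempty_empty
    · exact h
  have hKcomp : IsCompact K := isClosed_closure.isCompact
  obtain ⟨k₀, hk₀K, hk₀min⟩ := hKcomp.exists_isMinOn ⟨1, hKone⟩ hMcont.continuousOn
  refine ⟨M k₀, ?_, ?_⟩
  · have : (⟨k₀, hk₀K⟩ : K) ∈ S := by rw [hSall]; trivial
    exact this
  · intro t
    have hmem : CharFunSep.iota t ∈ K := subset_closure ⟨t, rfl⟩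
    have h1 : M k₀ ≤ M (CharFunSep.iota t) := isMinOn_iff.mp hk₀min _ hmem
    have h2 : M (CharFunSep.iota t) = ‖f t‖ := by
      show ‖CharFunSep.Afun μ (CharFunSep.iota t)‖ = _
      rw [CharFunSep.Afun_iota μ hμdisc t, hf t]
      rfl
    linarith
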